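/- arXiv:1708.06479 — 2 statements merged into one kernel-verified Lean document; each statement's English description precedes it below -/
import Mathlib

section
/- Let p ≥ 1 be an integer, let α > 1 be real, and let z ≥ 0 be real. Then ∑_{n=1}^{2^p−1} s_2(n)·((z+n)^{−α} − (z+n+1)^{−α}) = ∑_{l=0}^{p−1} (2^{l+1})^{−α}·[ζ(α, 1/2 + z/2^{l+1}) − ζ(α, 1 + z/2^{l+1}) − ζ(α, 1/2 + (z+2^p)/2^{l+1}) + ζ(α, 1 + (z+2^p)/2^{l+1})]. -/
/-- Number of ones in the binary expansion of `n` (sum of base-2 digits). -/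
def s2 (n : ℕ) : ℕ := (Nat.digits 2 n).sum

/-- Hurwitz zeta function `ζ(α, w) = ∑_{n ≥ 0} (w + n)^(-α)` for real `α > 1`, `w > 0`. -/
noncomputable def hurwitzZetaReal (α w : ℝ) : ℝ := ∑' n : ℕ, (w + n) ^ (-α)

set_option linter.unusedVariables false

lemma s2_eq_bits (p : ℕ) : ∀ n, n < 2 ^ p → s2 n = ∑ l ∈ Finset.range p, (n / 2 ^ l % 2) := by
  induction p with
  | zero => intro n hn; interval_cases n; simp [s2]
  | succ p ih =>
    intro n hn
    rcases Nat.eq_zero_or_pos n with rfl | hpos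
    · simp [s2]
    · have h1 : s2 n = n % 2 + s2 (n / 2) := by
        unfold s2; rw [Nat.digits_def' (by norm_num) hpos]; simp
      have h2 : n / 2 < 2 ^ p := by
        rw [Nat.div_lt_iff_lt_mul (by norm_num)]
        calc n < 2 ^ (p + 1) := hn
        _ = 2 ^ p * 2 := by ring
      rw [h1, ih _ h2, Finset.sum_range_succ']
      simp only [pow_zero, Nat.div_one]
      rw [add_comm]
      congr 1
      apply Finset.sum_congr rfl
      intro l _
      rw [pow_succ']
      rw [Nat.div_div_eq_div_mul, Nat.mul_comm]

lemma sum_range_mul (M K : ℕ) (g : ℕ → ℝ) :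
    ∑ n ∈ Finset.range (K * M), g n
      = ∑ k ∈ Finset.range K, ∑ r ∈ Finset.range M, g (k * M + r) := by
  induction K with
  | zero => simp
  | succ K ih =>
    rw [Nat.succ_mul, Finset.sum_range_add, ih, Finset.sum_range_succ]

lemma summable_aux (α w : ℝ) (hα : 1 < α) (hw : 0 ≤ w) :
    Summable (fun n : ℕ => (w + n) ^ (-α)) := by
  rw [← summable_nat_add_iff 1]
  have hbase : Summable (fun n : ℕ => ((n : ℝ) + 1) ^ (-α)) := by
    have := (summable_nat_add_iff (f := fun n : ℕ => (n : ℝ) ^ (-α)) 1).2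
      (Real.summable_nat_rpow.2 (by linarith))
    simpa using this
  apply Summable.of_nonneg_of_le _ _ hbase
  · intro n
    positivity
  · intro n
    apply Real.rpow_le_rpow_of_nonpos (by positivity) (by push_cast; linarith) (by linarith)

lemma zeta_diff (α w : ℝ) (hα : 1 < α) (hw : 0 ≤ w) (K : ℕ) :
    hurwitzZetaReal α w - hurwitzZetaReal α (w + K)
      = ∑ k ∈ Finset.range K, (w + k) ^ (-α) := by
  have hs := summable_aux α w hα hw
  have h := Summable.sum_add_tsum_nat_add (f := fun n : ℕ => (w + n) ^ (-α)) K hs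
  unfold hurwitzZetaReal
  have h3 : (∑' n : ℕ, (w + (K : ℝ) + (n : ℝ)) ^ (-α)) = ∑' n : ℕ, (w + ((n + K : ℕ) : ℝ)) ^ (-α) := by
    congr 1; ext n; push_cast; ring_nf
  rw [h3, ← h]
  simp

theorem stmt2 (p : ℕ) (hp : 1 ≤ p) (α z : ℝ) (hα : 1 < α) (hz : 0 ≤ z) :
    ∑ n ∈ Finset.Icc 1 (2 ^ p - 1),
      (s2 n : ℝ) * ((z + n) ^ (-α) - (z + n + 1) ^ (-α)) =
    ∑ l ∈ Finset.range p, ((2 : ℝ) ^ (l + 1)) ^ (-α) *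
      (hurwitzZetaReal α (1 / 2 + z / 2 ^ (l + 1)) - hurwitzZetaReal α (1 + z / 2 ^ (l + 1))
        - hurwitzZetaReal α (1 / 2 + (z + 2 ^ p) / 2 ^ (l + 1))
        + hurwitzZetaReal α (1 + (z + 2 ^ p) / 2 ^ (l + 1))) := by
  
  have h2p : 1 ≤ 2 ^ p := Nat.one_le_two_pow
  set f : ℕ → ℝ := fun n => (z + n) ^ (-α) with hf
  have step1 : ∑ n ∈ Finset.Icc 1 (2 ^ p - 1),
      (s2 n : ℝ) * ((z + n) ^ (-α) - (z + n + 1) ^ (-α))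
      = ∑ n ∈ Finset.range (2 ^ p), (s2 n : ℝ) * (f n - f (n + 1)) := by
    have hrange : Finset.range (2 ^ p) = insert 0 (Finset.Icc 1 (2 ^ p - 1)) := by
      ext n; simp only [Finset.mem_range, Finset.mem_insert, Finset.mem_Icc]; omega
    rw [hrange, Finset.sum_insert (by simp)]
    have h0 : (s2 0 : ℝ) = 0 := by simp [s2]
    rw [h0, zero_mul, zero_add]
    refine Finset.sum_congr rfl fun n _ => ?_
    simp only [hf]; push_cast; ring_nf
  have step2 : ∑ n ∈ Finset.range (2 ^ p), (s2 n : ℝ) * (f n - f (n + 1))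
      = ∑ l ∈ Finset.range p, ∑ n ∈ Finset.range (2 ^ p),
          ((n / 2 ^ l % 2 : ℕ) : ℝ) * (f n - f (n + 1)) := by
    rw [Finset.sum_comm]
    refine Finset.sum_congr rfl fun n hn => ?_
    rw [s2_eq_bits p n (Finset.mem_range.1 hn)]
    push_cast
    rw [Finset.sum_mul]
  rw [step1, step2]
  refine Finset.sum_congr rfl fun l hl => ?_
  have hlp := Finset.mem_range.1 hl
  set M := 2 ^ (l + 1) with hM
  set K := 2 ^ (p - l - 1) with hK
  have hlpos : (0:ℕ) < 2 ^ l := Nat.pow_pos (by norm_num)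
  have hKM : 2 ^ p = K * M := by rw [hK, hM, ← pow_add]; congr 1; omega
  have bit0 : ∀ k r : ℕ, r < 2 ^ l → (k * M + r) / 2 ^ l % 2 = 0 := by
    intro k r hr
    have h1 : k * M + r = r + 2 ^ l * (2 * k) := by rw [hM]; ring
    rw [h1, Nat.add_mul_div_left _ _ hlpos, Nat.div_eq_of_lt hr]
    omega
  have bit1 : ∀ k j : ℕ, j < 2 ^ l → (k * M + (2 ^ l + j)) / 2 ^ l % 2 = 1 := by
    intro k j hj
    have h1 : k * M + (2 ^ l + j) = j + 2 ^ l * (2 * k + 1) := by rw [hM]; ring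
    rw [h1, Nat.add_mul_div_left _ _ hlpos, Nat.div_eq_of_lt hj]
    omega
  have hMsplit : M = 2 ^ l + 2 ^ l := by rw [hM, pow_succ, mul_two]
  have inner : ∑ n ∈ Finset.range (2 ^ p), ((n / 2 ^ l % 2 : ℕ) : ℝ) * (f n - f (n + 1))
      = ∑ k ∈ Finset.range K, (f (k * M + 2 ^ l) - f ((k + 1) * M)) := by
    rw [hKM, sum_range_mul]
    refine Finset.sum_congr rfl fun k _ => ?_
    rw [show Finset.range M = Finset.range (2 ^ l + 2 ^ l) by rw [← hMsplit]]
    rw [Finset.sum_range_add]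
    have hzero : ∑ r ∈ Finset.range (2 ^ l),
        (((k * M + r) / 2 ^ l % 2 : ℕ) : ℝ) * (f (k * M + r) - f (k * M + r + 1)) = 0 := by
      apply Finset.sum_eq_zero; intro r hr
      rw [bit0 k r (Finset.mem_range.1 hr)]; simp
    rw [hzero, zero_add]
    have hterm : ∀ j ∈ Finset.range (2 ^ l),
        (((k * M + (2 ^ l + j)) / 2 ^ l % 2 : ℕ) : ℝ)
          * (f (k * M + (2 ^ l + j)) - f (k * M + (2 ^ l + j) + 1))
        = f (k * M + 2 ^ l + j) - f (k * M + 2 ^ l + (j + 1)) := by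
      intro j hj
      rw [bit1 k j (Finset.mem_range.1 hj)]
      rw [show k * M + (2 ^ l + j) = k * M + 2 ^ l + j by omega,
        show k * M + 2 ^ l + j + 1 = k * M + 2 ^ l + (j + 1) by omega]
      push_cast; ring
    rw [Finset.sum_congr rfl hterm,
      Finset.sum_range_sub' (fun j => f (k * M + 2 ^ l + j)) (2 ^ l)]
    rw [add_zero, show k * M + 2 ^ l + 2 ^ l = (k + 1) * M by rw [hMsplit]; ring]
  rw [inner]
  -- now the zeta side
  have hMpos : (0:ℝ) < (2:ℝ) ^ (l + 1) := by positivity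
  have hzM : (0:ℝ) ≤ z / 2 ^ (l + 1) := div_nonneg hz hMpos.le
  have h2pR : ((2:ℝ) ^ p) = (K : ℝ) * (2:ℝ) ^ (l + 1) := by
    have := congrArg (fun n : ℕ => (n : ℝ)) hKM
    push_cast at this
    simpa [hM] using this
  have harg1 : 1 / 2 + (z + 2 ^ p) / 2 ^ (l + 1)
      = (1 / 2 + z / 2 ^ (l + 1)) + (K : ℝ) := by
    rw [h2pR, add_div, mul_div_cancel_right₀ _ (ne_of_gt hMpos)]; ring
  have harg2 : 1 + (z + 2 ^ p) / 2 ^ (l + 1)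
      = (1 + z / 2 ^ (l + 1)) + (K : ℝ) := by
    rw [h2pR, add_div, mul_div_cancel_right₀ _ (ne_of_gt hMpos)]; ring
  have hζ1 := zeta_diff α (1 / 2 + z / 2 ^ (l + 1)) hα (by linarith) K
  have hζ2 := zeta_diff α (1 + z / 2 ^ (l + 1)) hα (by linarith) K
  rw [harg1, harg2]
  have hregroup : ((2:ℝ) ^ (l + 1)) ^ (-α) *
      (hurwitzZetaReal α (1 / 2 + z / 2 ^ (l + 1)) - hurwitzZetaReal α (1 + z / 2 ^ (l + 1))
        - hurwitzZetaReal α ((1 / 2 + z / 2 ^ (l + 1)) + (K : ℝ))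
        + hurwitzZetaReal α ((1 + z / 2 ^ (l + 1)) + (K : ℝ)))
      = ((2:ℝ) ^ (l + 1)) ^ (-α) *
        ((∑ k ∈ Finset.range K, (1 / 2 + z / 2 ^ (l + 1) + (k:ℝ)) ^ (-α))
          - ∑ k ∈ Finset.range K, (1 + z / 2 ^ (l + 1) + (k:ℝ)) ^ (-α)) := by
    rw [← hζ1, ← hζ2]; ring
  rw [hregroup, mul_sub, Finset.mul_sum, Finset.mul_sum, ← Finset.sum_sub_distrib]
  refine Finset.sum_congr rfl fun k _ => ?_
  have hk : (0:ℝ) ≤ (k:ℝ) := Nat.cast_nonneg k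
  have e1 : ((2:ℝ) ^ (l + 1)) ^ (-α) * (1 / 2 + z / 2 ^ (l + 1) + (k:ℝ)) ^ (-α)
      = f (k * M + 2 ^ l) := by
    rw [← Real.mul_rpow hMpos.le (by linarith)]
    simp only [hf]
    congr 1
    push_cast [hM]
    field_simp
    ring
  have e2 : ((2:ℝ) ^ (l + 1)) ^ (-α) * (1 + z / 2 ^ (l + 1) + (k:ℝ)) ^ (-α)
      = f ((k + 1) * M) := by
    rw [← Real.mul_rpow hMpos.le (by linarith)]
    simp only [hf]
    congr 1
    push_cast [hM]
    field_simp
    ring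
  rw [e1, e2]
end

section
/- Let z > −1 be real. Then ∏_{n=1}^{∞} ((1 + z/n)/(1 + z/(n+1)))^{s_2(n)} = (2^{2z}/Γ(z+1)) · ∏_{l=1}^{∞} Γ(z/2^l + 1), where Γ denotes the Gamma function. -/
open scoped Topology
open Filter Real Nat

lemma s2_zero : s2 0 = 0 := by simp [s2]

lemma s2_two_mul (m : ℕ) (hm : m ≠ 0) : s2 (2 * m) = s2 m := by
  unfold s2
  rw [Nat.digits_def' (by norm_num : 1 < 2) (by omega : 0 < 2 * m)]
  simp [Nat.mul_div_cancel_left, Nat.mul_mod_right]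

lemma s2_two_mul_add_one (m : ℕ) : s2 (2 * m + 1) = s2 m + 1 := by
  unfold s2
  rw [Nat.digits_def' (by norm_num : 1 < 2) (by omega : 0 < 2 * m + 1)]
  simp [Nat.add_mul_div_left, Nat.add_mul_mod_self_left, Nat.add_comm]

lemma s2_le_log (m : ℕ) (hm : m ≠ 0) : s2 m ≤ Nat.log 2 m + 1 := by
  have hlen : (Nat.digits 2 m).length = Nat.log 2 m + 1 := Nat.digits_len 2 m (by norm_num) hm
  have : (Nat.digits 2 m).sum ≤ (Nat.digits 2 m).length * 1 := by
    apply List.sum_le_card_nsmul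
    intro x hx
    have := Nat.digits_lt_base (by norm_num) hx
    omega
  simpa [s2, hlen] using this

lemma s2_le_sqrt (m : ℕ) (hm : 1 ≤ m) : (s2 m : ℝ) ≤ 5 * Real.sqrt m := by
  have hm0 : (m : ℝ) ≥ 1 := by exact_mod_cast hm
  have hsq : 1 ≤ Real.sqrt m := by
    rw [show (1:ℝ) = Real.sqrt 1 by simp]
    exact Real.sqrt_le_sqrt hm0
  set k := Nat.log 2 m with hk
  have h1 : (s2 m : ℝ) ≤ (k : ℝ) + 1 := by
    have := s2_le_log m (by omega)
    exact_mod_cast this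
  have h2 : (2:ℝ) ^ k ≤ m := by exact_mod_cast Nat.pow_log_le_self 2 (by omega : m ≠ 0)
  have h3 : (k : ℝ) * Real.log 2 ≤ Real.log m := by
    calc (k : ℝ) * Real.log 2 = Real.log ((2:ℝ) ^ k) := by rw [Real.log_pow]
    _ ≤ Real.log m := Real.log_le_log (show (0:ℝ) < (2:ℝ)^k by positivity) h2
  have hlog2 : (1:ℝ)/2 ≤ Real.log 2 := by
    have : (0.6931471803 : ℝ) < Real.log 2 := Real.log_two_gt_d9; linarith
  have h4 : (k : ℝ) ≤ 2 * Real.log m := by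
    nlinarith [Real.log_nonneg hm0, (Nat.cast_nonneg k : (0:ℝ) ≤ (k:ℝ))]
  have h5 : Real.log m ≤ 2 * Real.sqrt m := by
    have hs : Real.log m = 2 * Real.log (Real.sqrt m) := by
      conv_lhs => rw [← Real.sq_sqrt (show (0:ℝ) ≤ (m:ℝ) by positivity)]
      rw [sq, Real.log_mul (by positivity) (by positivity)]; ring
    have := Real.log_le_sub_one_of_pos (show (0:ℝ) < Real.sqrt m by positivity)
    nlinarith
  nlinarith

lemma abs_log_one_add_le {u : ℝ} (hu : |u| ≤ 1/2) : |Real.log (1+u)| ≤ 2 * |u| := by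
  have h1 : -(1/2 : ℝ) ≤ u := by cases abs_le.1 hu; linarith
  have h2 : u ≤ 1/2 := by cases abs_le.1 hu; assumption
  have hp : (0:ℝ) < 1 + u := by linarith
  have hub : Real.log (1+u) ≤ u := by
    have := Real.log_le_sub_one_of_pos hp; linarith
  have hlb : -(2 * |u|) ≤ Real.log (1+u) := by
    have hinv : Real.log (1+u) = - Real.log (1/(1+u)) := by
      rw [Real.log_div one_ne_zero (ne_of_gt hp)]; simp
    have h3 : Real.log (1/(1+u)) ≤ 1/(1+u) - 1 := Real.log_le_sub_one_of_pos (by positivity)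
    have h4 : 1/(1+u) - 1 = -u/(1+u) := by field_simp; ring
    have h5 : -u/(1+u) ≤ 2 * |u| := by
      rw [div_le_iff₀ hp]
      cases abs_cases u with
      | inl h => nlinarith [h.1, h.2]
      | inr h => nlinarith [h.1, h.2]
    rw [hinv]; linarith
  rw [abs_le]
  constructor
  · linarith
  · calc Real.log (1+u) ≤ u := hub
    _ ≤ |u| := le_abs_self u
    _ ≤ 2 * |u| := by nlinarith [abs_nonneg u]

noncomputable def TT (w : ℝ) (m : ℕ) : ℝ :=
  (s2 m : ℝ) * (Real.log (1 + w / m) - Real.log (1 + w / (m + 1)))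

lemma logdiff_bound {w x : ℝ} (hw : -1 < w) (hx : 1 ≤ x) (hwx : 2*|w| ≤ x) :
    |Real.log (1 + w/x) - Real.log (1 + w/(x+1))| ≤ 4*|w|/x^2 := by
  have hx0 : (0:ℝ) < x := by linarith
  have hx10 : (0:ℝ) < x + 1 := by linarith
  have hA1 : w ≤ |w| := le_abs_self w
  have hA2 : -|w| ≤ w := neg_abs_le w
  have hA0 : (0:ℝ) ≤ |w| := abs_nonneg w
  have h1 : (1/2:ℝ) ≤ 1 + w/x := by
    have : -(1/2:ℝ) ≤ w/x := by rw [le_div_iff₀ hx0]; nlinarith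
    linarith
  have h2 : (1/2:ℝ) ≤ 1 + w/(x+1) := by
    have : -(1/2:ℝ) ≤ w/(x+1) := by rw [le_div_iff₀ hx10]; nlinarith
    linarith
  have h3 : x/2 + 1 ≤ x + 1 + w := by nlinarith
  have h30 : (0:ℝ) < x + 1 + w := by linarith
  have hD0 : (0:ℝ) < x * (x+1+w) := by positivity
  have hne1 : (1 + w/(x+1)) ≠ 0 := by linarith
  have hne2 : x ≠ 0 := ne_of_gt hx0
  have hne3 : x + 1 ≠ 0 := ne_of_gt hx10
  have hid : (1 + w/x)/(1 + w/(x+1)) = 1 + w/(x*(x+1+w)) := by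
    field_simp
    ring
  have hlogd : Real.log (1 + w/x) - Real.log (1 + w/(x+1))
      = Real.log (1 + w/(x*(x+1+w))) := by
    rw [← Real.log_div (by linarith) hne1, hid]
  set u := w/(x*(x+1+w)) with hu
  have habsu : |u| = |w| / (x*(x+1+w)) := by
    rw [hu, abs_div, abs_of_pos hD0]
  have hu12 : |u| ≤ 1/2 := by
    rw [habsu, div_le_iff₀ hD0]; nlinarith
  have hkey : |Real.log (1+u)| ≤ 2 * |u| := abs_log_one_add_le hu12
  have hfinal : 2 * |u| ≤ 4 * |w| / x^2 := by
    rw [habsu, ← mul_div_assoc, div_le_div_iff₀ hD0 (pow_pos hx0 2)]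
    have hP : (0:ℝ) ≤ |w| * x := mul_nonneg hA0 hx0.le
    have h6 : |w| * x * (x/2+1) ≤ |w| * x * (x+1+w) := mul_le_mul_of_nonneg_left h3 hP
    nlinarith
  rw [hlogd]
  exact hkey.trans hfinal

lemma rpow_neg32 (m : ℕ) (hm : 1 ≤ m) :
    ((m:ℝ))^(-(3/2) : ℝ) = Real.sqrt m / (m:ℝ)^2 := by
  have hm0 : (0:ℝ) < m := by exact_mod_cast hm
  rw [Real.sqrt_eq_rpow, ← Real.rpow_natCast (m:ℝ) 2, ← Real.rpow_sub hm0]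
  norm_num

lemma TT_bound {w : ℝ} (hw : -1 < w) {m : ℕ} (hm : 1 ≤ m) (h2 : 2*|w| ≤ (m:ℝ)) :
    |TT w m| ≤ 20 * |w| * ((m:ℝ))^(-(3/2) : ℝ) := by
  have hm0 : (1:ℝ) ≤ m := by exact_mod_cast hm
  have hlog := logdiff_bound hw hm0 h2
  have hs2 := s2_le_sqrt m hm
  have hs20 : (0:ℝ) ≤ (s2 m : ℝ) := by positivity
  rw [rpow_neg32 m hm]
  have : |TT w m| = (s2 m : ℝ) * |Real.log (1 + w/m) - Real.log (1 + w/(m+1))| := by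
    rw [TT, abs_mul, abs_of_nonneg hs20]
  rw [this]
  calc (s2 m : ℝ) * |Real.log (1 + w/m) - Real.log (1 + w/(m+1))|
      ≤ (5 * Real.sqrt m) * (4*|w|/(m:ℝ)^2) := by
        apply mul_le_mul hs2 hlog (abs_nonneg _) (by positivity)
    _ = 20 * |w| * (Real.sqrt m / (m:ℝ)^2) := by ring

lemma TT_zero (w : ℝ) : TT w 0 = 0 := by simp [TT, s2_zero]

lemma summable_rpow32 : Summable (fun m : ℕ => ((m:ℝ))^(-(3/2) : ℝ)) :=
  Real.summable_nat_rpow.mpr (by norm_num)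

lemma summable_TT {w : ℝ} (hw : -1 < w) : Summable (TT w) := by
  apply Summable.of_norm_bounded_eventually (g := fun m : ℕ => 20 * |w| * ((m:ℝ))^(-(3/2) : ℝ))
    (summable_rpow32.mul_left _)
  rw [Nat.cofinite_eq_atTop, Filter.eventually_atTop]
  refine ⟨⌈2*|w|⌉₊ + 1, fun m hm => ?_⟩
  have h1 : 1 ≤ m := by omega
  have h2 : 2*|w| ≤ (m:ℝ) := by
    calc 2*|w| ≤ (⌈2*|w|⌉₊ : ℝ) := Nat.le_ceil _
    _ ≤ (m:ℝ) := by exact_mod_cast le_trans (by omega) hm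
  simpa [Real.norm_eq_abs] using TT_bound hw h1 h2

noncomputable def SS (w : ℝ) : ℝ := ∑' m, TT w m

noncomputable def KK : ℝ := ∑' m : ℕ, ((m:ℝ))^(-(3/2) : ℝ)

lemma SS_bound {w : ℝ} (hw : |w| ≤ 1/2) : |SS w| ≤ 20 * |w| * KK := by
  have hw1 : -1 < w := by cases abs_le.1 hw; linarith
  have hb : ∀ m : ℕ, |TT w m| ≤ 20 * |w| * ((m:ℝ))^(-(3/2) : ℝ) := by
    intro m
    match m with
    | 0 => simp [TT_zero]
    | (Nat.succ k) =>
      apply TT_bound hw1 (by omega)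
      have : (1:ℝ) ≤ (k+1:ℕ) := by exact_mod_cast Nat.succ_le_succ (Nat.zero_le k)
      push_cast
      push_cast at this
      linarith [abs_le.1 hw |>.2, abs_le.1 hw |>.1, abs_nonneg w]
  have habs : Summable (fun m => |TT w m|) := (summable_TT hw1).abs
  calc |SS w| ≤ ∑' m, |TT w m| := by
        have := norm_tsum_le_tsum_norm (f := TT w) (by simpa [Real.norm_eq_abs] using habs)
        simpa [Real.norm_eq_abs, SS] using this
    _ ≤ ∑' m : ℕ, 20 * |w| * ((m:ℝ))^(-(3/2) : ℝ) :=
        Summable.tsum_le_tsum hb habs (summable_rpow32.mul_left _)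
    _ = 20 * |w| * KK := by rw [KK, tsum_mul_left]

noncomputable def vv (w : ℝ) (k : ℕ) : ℝ :=
  Real.log (1 + w/(2*(k:ℝ)+1)) - Real.log (1 + w/(2*(k:ℝ)+2))

lemma vv_bound {w : ℝ} (hw : -1 < w) {k : ℕ} (hk : 1 ≤ k) (h2 : 2*|w| ≤ (k:ℝ)) :
    |vv w k| ≤ 4 * |w| * ((k:ℝ))^(-(3/2) : ℝ) := by
  have hk1 : (1:ℝ) ≤ (k:ℝ) := by exact_mod_cast hk
  have hb := logdiff_bound hw (by linarith : (1:ℝ) ≤ 2*(k:ℝ)+1) (by linarith)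
  have he : (2*(k:ℝ)+1) + 1 = 2*(k:ℝ)+2 := by ring
  rw [he] at hb
  refine le_trans hb ?_
  have hkp : (0:ℝ) < (k:ℝ) := by linarith
  have h32 : (0:ℝ) < (k:ℝ)^((3/2):ℝ) := Real.rpow_pos_of_pos hkp _
  have hle : (k:ℝ)^((3/2):ℝ) ≤ (2*(k:ℝ)+1)^2 := by
    calc (k:ℝ)^((3/2):ℝ) ≤ (k:ℝ)^((2:ℕ):ℝ) :=
          Real.rpow_le_rpow_of_exponent_le hk1 (by norm_num)
    _ = (k:ℝ)^(2:ℕ) := Real.rpow_natCast _ 2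
    _ ≤ (2*(k:ℝ)+1)^2 := by nlinarith
  have : 4*|w|/(2*(k:ℝ)+1)^2 ≤ 4*|w|/(k:ℝ)^((3/2):ℝ) :=
    div_le_div_of_nonneg_left (by positivity) h32 hle
  refine this.trans ?_
  rw [Real.rpow_neg hkp.le, div_eq_mul_inv]

lemma summable_vv {w : ℝ} (hw : -1 < w) : Summable (vv w) := by
  apply Summable.of_norm_bounded_eventually (g := fun k : ℕ => 4 * |w| * ((k:ℝ))^(-(3/2) : ℝ))
    (summable_rpow32.mul_left _)
  rw [Nat.cofinite_eq_atTop, Filter.eventually_atTop]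
  refine ⟨⌈2*|w|⌉₊ + 1, fun k hk => ?_⟩
  have h1 : 1 ≤ k := by omega
  have h2 : 2*|w| ≤ (k:ℝ) := by
    calc 2*|w| ≤ (⌈2*|w|⌉₊ : ℝ) := Nat.le_ceil _
    _ ≤ (k:ℝ) := by exact_mod_cast le_trans (by omega) hk
  simpa [Real.norm_eq_abs] using vv_bound hw h1 h2

lemma s2_one : s2 1 = 1 := by simp [s2]

lemma TT_comb (w : ℝ) (k : ℕ) : TT w (2*k) + (TT w (2*k+1) - vv w k) = TT (w/2) k := by
  match k with
  | 0 => norm_num [TT, vv, s2_zero, s2_one]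
  | (n+1) =>
    rw [TT, TT, TT, s2_two_mul (n+1) (by omega), s2_two_mul_add_one (n+1), vv]
    push_cast
    have d1 : w/(2*((n:ℝ)+1)) = (w/2)/((n:ℝ)+1) := (div_div w 2 ((n:ℝ)+1)).symm
    have d2 : w/(2*((n:ℝ)+1)+1+1) = (w/2)/((n:ℝ)+1+1) := by
      rw [div_div]; congr 1; ring
    have d3 : w/(2*((n:ℝ)+1)+2) = (w/2)/((n:ℝ)+1+1) := by
      rw [div_div]; congr 1; ring
    rw [d1, d2, d3]
    ring

lemma SS_funeq {w : ℝ} (hw : -1 < w) : SS w = SS (w/2) + ∑' k, vv w k := by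
  have hT := summable_TT hw
  have hE : Summable (fun k => TT w (2*k)) :=
    hT.comp_injective (fun a b h => by omega)
  have hO : Summable (fun k => TT w (2*k+1)) :=
    hT.comp_injective (fun a b h => by omega)
  have hv := summable_vv hw
  have hmid : Summable (fun k => TT w (2*k+1) - vv w k) := hO.sub hv
  calc SS w = (∑' k, TT w (2*k)) + (∑' k, TT w (2*k+1)) := (tsum_even_add_odd hE hO).symm
  _ = (∑' k, TT w (2*k)) + ((∑' k, (TT w (2*k+1) - vv w k)) + ∑' k, vv w k) := by
      rw [← Summable.tsum_add hmid hv]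
      congr 1
      apply tsum_congr
      intro k
      ring
  _ = ((∑' k, TT w (2*k)) + (∑' k, (TT w (2*k+1) - vv w k))) + ∑' k, vv w k := by ring
  _ = (∑' k, (TT w (2*k) + (TT w (2*k+1) - vv w k))) + ∑' k, vv w k := by
      rw [Summable.tsum_add hE hmid]
  _ = (∑' k, TT (w/2) k) + ∑' k, vv w k := by
      congr 1
      exact tsum_congr (fun k => TT_comb w k)
  _ = SS (w/2) + ∑' k, vv w k := rfl

noncomputable def pp (w : ℝ) (k : ℕ) : ℝ :=
  (((1+w)/2 + k) * (1 + k)) / ((1/2 + k) * (1 + w/2 + k))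

lemma pp_pos {w : ℝ} (hw : -1 < w) (k : ℕ) : 0 < pp w k := by
  have hk0 : (0:ℝ) ≤ (k:ℝ) := Nat.cast_nonneg k
  have h1 : (0:ℝ) < (1+w)/2 + k := by linarith
  have h2 : (0:ℝ) < 1 + w/2 + k := by linarith
  have h3 : (0:ℝ) < (1:ℝ) + k := by positivity
  have h4 : (0:ℝ) < (1:ℝ)/2 + k := by positivity
  exact div_pos (mul_pos h1 h3) (mul_pos h4 h2)

lemma vv_eq_log_pp {w : ℝ} (hw : -1 < w) (k : ℕ) : vv w k = Real.log (pp w k) := by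
  have hk0 : (0:ℝ) ≤ (k:ℝ) := Nat.cast_nonneg k
  have hk1 : (0:ℝ) < 2*(k:ℝ)+1 := by positivity
  have hk2 : (0:ℝ) < 2*(k:ℝ)+2 := by positivity
  have hA : (0:ℝ) < 1 + w/(2*(k:ℝ)+1) := by
    have h : 1 + w/(2*(k:ℝ)+1) = (2*(k:ℝ)+1+w)/(2*(k:ℝ)+1) := by field_simp
    rw [h]; exact div_pos (by linarith) hk1
  have hB : (0:ℝ) < 1 + w/(2*(k:ℝ)+2) := by
    have h : 1 + w/(2*(k:ℝ)+2) = (2*(k:ℝ)+2+w)/(2*(k:ℝ)+2) := by field_simp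
    rw [h]; exact div_pos (by linarith) hk2
  have hd1 : ((1:ℝ)/2 + k) ≠ 0 := by positivity
  have hd2 : (1 + w/2 + (k:ℝ)) ≠ 0 := by
    have : -1 < w/2 := by linarith
    have : (0:ℝ) < 1 + w/2 + k := by linarith
    exact this.ne'
  have hpp : pp w k = (1 + w/(2*(k:ℝ)+1)) / (1 + w/(2*(k:ℝ)+2)) := by
    rw [pp, div_eq_div_iff (mul_ne_zero hd1 hd2) hB.ne']
    field_simp
    ring
  rw [vv, ← Real.log_div hA.ne' hB.ne', hpp]

lemma wallis_step {w : ℝ} (hw : -1 < w) :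
    Filter.Tendsto (fun n => ∏ k ∈ Finset.range n, pp w k) Filter.atTop
      (𝓝 (Real.Gamma (1/2) * Real.Gamma (1+w/2) / (Real.Gamma ((1+w)/2) * Real.Gamma 1))) := by
  have hg1 : (0:ℝ) < Real.Gamma ((1+w)/2) := Real.Gamma_pos_of_pos (by linarith)
  have hg2 : (0:ℝ) < Real.Gamma 1 := Real.Gamma_pos_of_pos one_pos
  have hlim : Filter.Tendsto (fun n => Real.GammaSeq (1/2) n * Real.GammaSeq (1+w/2) n /
      (Real.GammaSeq ((1+w)/2) n * Real.GammaSeq 1 n)) Filter.atTop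
      (𝓝 (Real.Gamma (1/2) * Real.Gamma (1+w/2) / (Real.Gamma ((1+w)/2) * Real.Gamma 1))) :=
    (((Real.GammaSeq_tendsto_Gamma (1/2)).mul (Real.GammaSeq_tendsto_Gamma (1+w/2))).div
      ((Real.GammaSeq_tendsto_Gamma ((1+w)/2)).mul (Real.GammaSeq_tendsto_Gamma 1))
      (mul_pos hg1 hg2).ne')
  have heq : ∀ n : ℕ, 1 ≤ n → ∏ k ∈ Finset.range (n+1), pp w k =
      Real.GammaSeq (1/2) n * Real.GammaSeq (1+w/2) n /
        (Real.GammaSeq ((1+w)/2) n * Real.GammaSeq 1 n) := by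
    intro n hn
    have hn0 : (0:ℝ) < n := by exact_mod_cast hn
    have hQ : ∀ s : ℝ, 0 < s → (0:ℝ) < ∏ j ∈ Finset.range (n+1), (s + (j:ℝ)) := by
      intro s hs
      apply Finset.prod_pos
      intro j _
      have : (0:ℝ) ≤ (j:ℝ) := Nat.cast_nonneg j
      linarith
    have hQh := hQ (1/2) (by norm_num)
    have hQb := hQ (1+w/2) (by linarith)
    have hQa := hQ ((1+w)/2) (by linarith)
    have hQ1 := hQ 1 one_pos
    have hF : (0:ℝ) < (n ! : ℝ) := by exact_mod_cast Nat.factorial_pos n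
    have hrpow : (n:ℝ)^((1:ℝ)/2) * (n:ℝ)^(1+w/2) = (n:ℝ)^((1+w)/2) * (n:ℝ)^(1:ℝ) := by
      rw [← Real.rpow_add hn0, ← Real.rpow_add hn0]
      congr 1
      ring
    have hprod : ∏ k ∈ Finset.range (n+1), pp w k =
        ((∏ j ∈ Finset.range (n+1), (((1+w)/2) + (j:ℝ))) * ∏ j ∈ Finset.range (n+1), ((1:ℝ) + (j:ℝ)))
        / ((∏ j ∈ Finset.range (n+1), ((1/2:ℝ) + (j:ℝ))) * ∏ j ∈ Finset.range (n+1), ((1 + w/2) + (j:ℝ))) := by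
      rw [← Finset.prod_mul_distrib, ← Finset.prod_mul_distrib, ← Finset.prod_div_distrib]
      rfl
    rw [hprod, Real.GammaSeq, Real.GammaSeq, Real.GammaSeq, Real.GammaSeq]
    set A := ∏ j ∈ Finset.range (n+1), (((1+w)/2) + (j:ℝ)) with hAdef
    set B := ∏ j ∈ Finset.range (n+1), ((1:ℝ) + (j:ℝ)) with hBdef
    set C := ∏ j ∈ Finset.range (n+1), ((1/2:ℝ) + (j:ℝ)) with hCdef
    set D := ∏ j ∈ Finset.range (n+1), ((1 + w/2) + (j:ℝ)) with hDdef
    have hA0 : (0:ℝ) < A := hQa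
    have hB0 : (0:ℝ) < B := hQ1
    have hC0 : (0:ℝ) < C := hQh
    have hD0 : (0:ℝ) < D := hQb
    have hX1 : (0:ℝ) < (n:ℝ)^((1:ℝ)/2) := Real.rpow_pos_of_pos hn0 _
    have hX2 : (0:ℝ) < (n:ℝ)^(1+w/2) := Real.rpow_pos_of_pos hn0 _
    have hX3 : (0:ℝ) < (n:ℝ)^((1+w)/2) := Real.rpow_pos_of_pos hn0 _
    have hX4 : (0:ℝ) < (n:ℝ)^(1:ℝ) := Real.rpow_pos_of_pos hn0 _
    rw [div_eq_div_iff (mul_pos hC0 hD0).ne'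
      (mul_pos (div_pos (mul_pos hX3 hF) hA0) (div_pos (mul_pos hX4 hF) hB0)).ne']
    have h5 : (n:ℝ)^((1:ℝ)/2) * (n:ℝ)^((2+w)/2) = (n:ℝ)^((1+w)/2) * (n:ℝ) := by
      rw [← Real.rpow_add hn0, show (1:ℝ)/2 + (2+w)/2 = (1+w)/2 + 1 by ring,
        Real.rpow_add hn0, Real.rpow_one]
    field_simp
    simp only [Real.rpow_one]
    linear_combination (-1:ℝ) * h5
  have hshift : Filter.Tendsto (fun n => ∏ k ∈ Finset.range (n+1), pp w k) Filter.atTop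
      (𝓝 (Real.Gamma (1/2) * Real.Gamma (1+w/2) / (Real.Gamma ((1+w)/2) * Real.Gamma 1))) := by
    apply hlim.congr'
    rw [Filter.EventuallyEq, Filter.eventually_atTop]
    exact ⟨1, fun n hn => (heq n hn).symm⟩
  exact (Filter.tendsto_add_atTop_iff_nat 1).mp hshift

lemma vv_sum {w : ℝ} (hw : -1 < w) :
    ∑' k, vv w k = w * Real.log 2 + 2 * Real.log (Real.Gamma (1+w/2))
      - Real.log (Real.Gamma (1+w)) := by
  have hv := summable_vv hw
  have hga : (0:ℝ) < Real.Gamma ((1+w)/2) := Real.Gamma_pos_of_pos (by linarith)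
  have hgb : (0:ℝ) < Real.Gamma (1+w/2) := Real.Gamma_pos_of_pos (by linarith)
  have hgc : (0:ℝ) < Real.Gamma (1+w) := Real.Gamma_pos_of_pos (by linarith)
  have hπ : (0:ℝ) < Real.sqrt π := Real.sqrt_pos.mpr Real.pi_pos
  set L := Real.Gamma (1/2) * Real.Gamma (1+w/2) / (Real.Gamma ((1+w)/2) * Real.Gamma 1) with hLdef
  have hLpos : 0 < L := by
    rw [hLdef, Real.Gamma_one_half_eq, Real.Gamma_one]
    positivity
  have h1 : Filter.Tendsto (fun n => ∑ k ∈ Finset.range n, vv w k) Filter.atTop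
      (𝓝 (∑' k, vv w k)) := hv.hasSum.tendsto_sum_nat
  have h2 : Filter.Tendsto (fun n => ∑ k ∈ Finset.range n, vv w k) Filter.atTop
      (𝓝 (Real.log L)) := by
    have he : ∀ n, ∑ k ∈ Finset.range n, vv w k
        = Real.log (∏ k ∈ Finset.range n, pp w k) := by
      intro n
      rw [Real.log_prod (fun k _ => (pp_pos hw k).ne')]
      exact Finset.sum_congr rfl (fun k _ => vv_eq_log_pp hw k)
    simp only [he]
    exact ((Real.continuousAt_log hLpos.ne').tendsto).comp (wallis_step hw)
  have hlog : ∑' k, vv w k = Real.log L := tendsto_nhds_unique h1 h2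
  have hdup := Real.Gamma_mul_Gamma_add_half ((1+w)/2)
  rw [show (1+w)/2 + 1/2 = 1 + w/2 by ring] at hdup
  rw [show (1:ℝ)-2*((1+w)/2) = -w by ring] at hdup
  rw [show 2*((1+w)/2) = 1+w by ring] at hdup
  have hinv : (2:ℝ)^(w:ℝ) * (2:ℝ)^(-w:ℝ) = 1 := by
    rw [← Real.rpow_add two_pos]
    norm_num
  have h2w : (0:ℝ) < (2:ℝ)^(w:ℝ) := Real.rpow_pos_of_pos two_pos _
  have hLval : L = (2:ℝ)^(w:ℝ) * (Real.Gamma (1+w/2))^2 / Real.Gamma (1+w) := by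
    rw [hLdef, Real.Gamma_one_half_eq, Real.Gamma_one]
    rw [div_eq_div_iff (by positivity) hgc.ne']
    linear_combination (-(2:ℝ)^(w:ℝ) * Real.Gamma (1+w/2)) * hdup
      - (Real.sqrt π * Real.Gamma (1+w/2) * Real.Gamma (1+w)) * hinv
  rw [hlog, hLval, Real.log_div (by positivity) hgc.ne',
    Real.log_mul h2w.ne' (by positivity), Real.log_rpow two_pos, Real.log_pow]
  push_cast
  ring

lemma half_pow_gt {z : ℝ} (hz : -1 < z) (j : ℕ) : -1 < z / 2^j := by
  have hp : (0:ℝ) < 2^j := by positivity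
  rcases le_or_gt 0 z with h | h
  · have : (0:ℝ) ≤ z / 2^j := by positivity
    linarith
  · have h2 : (1:ℝ) ≤ 2^j := one_le_pow₀ one_le_two
    rw [show (-1:ℝ) = -1 by ring, lt_div_iff₀ hp] -- -1 * 2^j < z ?
    nlinarith

lemma SS_iter {z : ℝ} (hz : -1 < z) (K : ℕ) :
    SS z = SS (z / 2^K) + ∑ j ∈ Finset.range K, ∑' k, vv (z / 2^j) k := by
  induction K with
  | zero => simp
  | succ K ih =>
    rw [ih, Finset.sum_range_succ]
    have h := SS_funeq (half_pow_gt hz K)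
    have hdd : z / 2^K / 2 = z / 2^(K+1) := by rw [div_div, ← pow_succ]
    rw [h, hdd]
    ring

lemma gamma_arg_pos {z : ℝ} (hz : -1 < z) (j : ℕ) : (0:ℝ) < 1 + z / 2^j := by
  have := half_pow_gt hz j
  linarith

lemma diff_logGamma : DifferentiableAt ℝ (fun x : ℝ => Real.log (Real.Gamma (1+x))) 0 := by
  have h1 : DifferentiableAt ℝ Real.Gamma ((fun x : ℝ => 1+x) 0) := by
    apply Real.differentiableAt_Gamma
    intro m
    have := Nat.cast_nonneg (α := ℝ) m
    intro heq
    simp only at heq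
    linarith [heq]
  have h2 : DifferentiableAt ℝ (fun x : ℝ => Real.Gamma (1+x)) 0 :=
    h1.comp 0 ((differentiableAt_fun_id).const_add 1)
  apply h2.log
  norm_num [Real.Gamma_one]

lemma summable_logGamma (z : ℝ) :
    Summable (fun l : ℕ => Real.log (Real.Gamma (1 + z / 2^(l+1)))) := by
  set g : ℝ → ℝ := fun x => Real.log (Real.Gamma (1+x)) with hgdef
  have hg0 : g 0 = 0 := by norm_num [hgdef, Real.Gamma_one]
  have hbig : (fun x => g x - g 0) =O[𝓝 0] (fun x : ℝ => x - 0) :=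
    diff_logGamma.isBigO_sub
  have hbig' : g =O[𝓝 0] (fun x : ℝ => x) := by simpa [hg0] using hbig
  have hu : Filter.Tendsto (fun l : ℕ => z / 2^(l+1)) Filter.atTop (𝓝 0) := by
    have h := tendsto_pow_atTop_nhds_zero_of_lt_one
      (by norm_num : (0:ℝ) ≤ 1/2) (by norm_num : (1/2:ℝ) < 1)
    have h2 := h.const_mul (z/2)
    rw [mul_zero] at h2
    apply h2.congr
    intro l
    rw [div_pow, one_pow, mul_one_div, div_div, ← _root_.pow_succ']
  have hcomp : (fun l : ℕ => g (z / 2^(l+1))) =O[Filter.atTop]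
      (fun l : ℕ => z / 2^(l+1)) := hbig'.comp_tendsto hu
  have hgeo : Summable (fun l : ℕ => z / 2^(l+1)) := by
    have hs : Summable (fun l : ℕ => (z/2) * (1/2:ℝ)^l) := summable_geometric_two.mul_left _
    apply hs.congr
    intro l
    rw [div_pow, one_pow, mul_one_div, div_div, ← _root_.pow_succ']
  exact summable_of_isBigO_nat hgeo hcomp

lemma SS_formula {z : ℝ} (hz : -1 < z) :
    SS z = 2*z*Real.log 2 - Real.log (Real.Gamma (1+z))
      + ∑' l : ℕ, Real.log (Real.Gamma (1 + z / 2^(l+1))) := by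
  set g : ℕ → ℝ := fun j => Real.log (Real.Gamma (1 + z/2^j)) with hgdef
  set σ : ℝ := ∑' l : ℕ, Real.log (Real.Gamma (1 + z / 2^(l+1))) with hσdef
  have hVj : ∀ j : ℕ, ∑' k, vv (z/2^j) k
      = (z/2^j) * Real.log 2 + 2 * g (j+1) - g j := by
    intro j
    rw [vv_sum (half_pow_gt hz j)]
    have e1 : 1 + (z/2^j)/2 = 1 + z/2^(j+1) := by rw [div_div, ← pow_succ]
    have e2 : 1 + (z/2^j) = 1 + z/2^j := rfl
    rw [e1]
  have hsum : ∀ K : ℕ, ∑ j ∈ Finset.range K, ∑' k, vv (z/2^j) k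
      = Real.log 2 * (∑ j ∈ Finset.range K, z/2^j)
        + (∑ j ∈ Finset.range K, g (j+1)) + (g K - g 0) := by
    intro K
    induction K with
    | zero => simp
    | succ K ih =>
      rw [Finset.sum_range_succ, ih, hVj K, Finset.sum_range_succ, Finset.sum_range_succ]
      ring
  -- limits
  have h1 : Filter.Tendsto (fun K : ℕ => SS (z/2^K)) Filter.atTop (𝓝 0) := by
    refine squeeze_zero_norm' (a := fun K : ℕ => 20 * |z| * KK * (1/2)^K) ?_ ?_
    · have hev : ∀ᶠ K : ℕ in Filter.atTop, 2*|z| ≤ (2:ℝ)^K :=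
        (tendsto_pow_atTop_atTop_of_one_lt (one_lt_two : (1:ℝ) < 2)).eventually_ge_atTop _
      apply hev.mono
      intro K hK
      have hpow : (0:ℝ) < 2^K := by positivity
      have habs : |z / 2^K| = |z| / 2^K := by
        rw [abs_div, abs_of_pos hpow]
      have hle : |z / 2^K| ≤ 1/2 := by
        rw [habs, div_le_iff₀ hpow]
        linarith
      have hb := SS_bound hle
      rw [Real.norm_eq_abs]
      refine hb.trans (le_of_eq ?_)
      show 20 * |z / 2 ^ K| * KK = 20 * |z| * KK * (1/2)^K
      rw [habs, div_pow, one_pow]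
      ring
    · have h := tendsto_pow_atTop_nhds_zero_of_lt_one
        (by norm_num : (0:ℝ) ≤ 1/2) (by norm_num : (1/2:ℝ) < 1)
      have h' := h.const_mul (20 * |z| * KK)
      rw [mul_zero] at h'
      exact h'
  have hgs : HasSum (fun j : ℕ => z/2^j) (2*z) := by
    have h := (hasSum_geometric_two).mul_left z
    have he : (fun j : ℕ => z * (1/2:ℝ)^j) = (fun j : ℕ => z/2^j) := by
      funext j
      rw [div_pow, one_pow]
      ring
    rw [he, mul_comm z 2] at h
    exact h
  have h2 : Filter.Tendsto (fun K : ℕ => Real.log 2 * ∑ j ∈ Finset.range K, z/2^j)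
      Filter.atTop (𝓝 (Real.log 2 * (2*z))) :=
    hgs.tendsto_sum_nat.const_mul (Real.log 2)
  have h3 : Filter.Tendsto (fun K : ℕ => ∑ j ∈ Finset.range K, g (j+1))
      Filter.atTop (𝓝 σ) := (summable_logGamma z).hasSum.tendsto_sum_nat
  have h4 : Filter.Tendsto (fun K : ℕ => g K) Filter.atTop (𝓝 0) := by
    have hu : Filter.Tendsto (fun K : ℕ => z / 2^K) Filter.atTop (𝓝 0) := by
      have h := tendsto_pow_atTop_nhds_zero_of_lt_one
        (by norm_num : (0:ℝ) ≤ 1/2) (by norm_num : (1/2:ℝ) < 1)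
      have h2' := h.const_mul z
      rw [mul_zero] at h2'
      apply h2'.congr
      intro l
      rw [div_pow, one_pow, mul_one_div]
    have hc : ContinuousAt (fun x : ℝ => Real.log (Real.Gamma (1+x))) 0 :=
      diff_logGamma.continuousAt
    have hcomp := (hc.tendsto).comp hu
    simpa [Function.comp_def, Real.Gamma_one, hgdef] using hcomp
  have hg0 : g 0 = Real.log (Real.Gamma (1+z)) := by
    simp [hgdef]
  have hbig : Filter.Tendsto (fun K : ℕ => SS (z/2^K)
      + (Real.log 2 * (∑ j ∈ Finset.range K, z/2^j)
        + (∑ j ∈ Finset.range K, g (j+1)) + (g K - g 0)))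
      Filter.atTop (𝓝 (0 + (Real.log 2 * (2*z) + σ + (0 - g 0)))) :=
    h1.add ((h2.add h3).add (h4.sub tendsto_const_nhds))
  have hconst : Filter.Tendsto (fun _ : ℕ => SS z) Filter.atTop
      (𝓝 (0 + (Real.log 2 * (2*z) + σ + (0 - g 0)))) := by
    apply hbig.congr
    intro K
    rw [← hsum K]
    exact (SS_iter hz K).symm
  have hfin := tendsto_nhds_unique hconst tendsto_const_nhds
  rw [← hfin, hg0]
  ring

lemma one_add_div_pos {w : ℝ} (hw : -1 < w) {x : ℝ} (hx : 1 ≤ x) : 0 < 1 + w / x := by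
  have hx0 : (0:ℝ) < x := by linarith
  have h : 1 + w / x = (x + w) / x := by field_simp
  rw [h]
  exact div_pos (by linarith) hx0

theorem stmt10 (z : ℝ) (hz : -1 < z) :
    ∏' n : ℕ, ((1 + z / (n + 1)) / (1 + z / (n + 2))) ^ s2 (n + 1) =
    ((2 : ℝ) ^ (2 * z) / Real.Gamma (z + 1)) *
      ∏' l : ℕ, Real.Gamma (z / 2 ^ (l + 1) + 1) := by
  have hcast : ∀ n : ℕ, (0:ℝ) ≤ (n:ℝ) := fun n => Nat.cast_nonneg n
  have hterm : ∀ n : ℕ, ((1 + z / ((n:ℝ) + 1)) / (1 + z / ((n:ℝ) + 2))) ^ s2 (n + 1)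
      = Real.exp (TT z (n+1)) := by
    intro n
    have hA : (0:ℝ) < 1 + z / ((n:ℝ)+1) := one_add_div_pos hz (by linarith [hcast n])
    have hB : (0:ℝ) < 1 + z / ((n:ℝ)+2) := one_add_div_pos hz (by linarith [hcast n])
    have hc : ((n+1 : ℕ) : ℝ) = (n:ℝ)+1 := by push_cast; ring
    rw [TT, hc]
    rw [show ((n:ℝ)+1)+1 = (n:ℝ)+2 by ring]
    rw [Real.exp_nat_mul, Real.exp_sub, Real.exp_log hA, Real.exp_log hB]
  have hTsum : HasSum (fun n => TT z (n+1)) (SS z) := by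
    have h0 : HasSum (TT z) (SS z) := (summable_TT hz).hasSum
    refine (hasSum_nat_add_iff 1).mpr ?_
    simpa [TT_zero] using h0
  have hprodL : HasProd
      (fun n : ℕ => ((1 + z / ((n:ℝ) + 1)) / (1 + z / ((n:ℝ) + 2))) ^ s2 (n + 1))
      (Real.exp (SS z)) := by
    have h := hTsum.rexp
    have he : (Real.exp ∘ fun n => TT z (n+1))
        = fun n : ℕ => ((1 + z / ((n:ℝ)+1)) / (1 + z / ((n:ℝ)+2))) ^ s2 (n+1) := by
      funext n
      rw [Function.comp_apply, hterm n]
    rwa [he] at h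
  have hGsum : HasSum (fun l : ℕ => Real.log (Real.Gamma (1 + z/2^(l+1))))
      (∑' l : ℕ, Real.log (Real.Gamma (1 + z / 2^(l+1)))) := (summable_logGamma z).hasSum
  have hprodR : HasProd (fun l : ℕ => Real.Gamma (z / 2^(l+1) + 1))
      (Real.exp (∑' l : ℕ, Real.log (Real.Gamma (1 + z / 2^(l+1))))) := by
    have h := hGsum.rexp
    have he : (Real.exp ∘ fun l : ℕ => Real.log (Real.Gamma (1 + z/2^(l+1))))
        = fun l : ℕ => Real.Gamma (z / 2^(l+1) + 1) := by
      funext l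
      rw [Function.comp_apply,
        Real.exp_log (Real.Gamma_pos_of_pos (gamma_arg_pos hz (l+1))), add_comm]
    rwa [he] at h
  rw [hprodL.tprod_eq, hprodR.tprod_eq, SS_formula hz]
  rw [Real.exp_add, Real.exp_sub]
  rw [Real.rpow_def_of_pos (two_pos)]
  rw [Real.exp_log (Real.Gamma_pos_of_pos (by linarith : (0:ℝ) < 1+z))]
  rw [show Real.log 2 * (2*z) = 2*z*Real.log 2 by ring, show z+1 = 1+z by ring]
end
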